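/- Let H be an inner product space (over ℝ or ℂ). For all integers n > k ≥ 2 and all vectors x_1, …, x_n ∈ H, one has C(n−2, k−2) · ‖x_1 + ⋯ + x_n‖² = ∑_{A ⊆ {1,…,n}, |A| = k} ‖x_A‖² − C(n−2, k−1) · ∑_{i=1}^{n} ‖x_i‖², where C(m, j) denotes the binomial coefficient m choose j. -/

import Mathlib

open Finset

lemma card_filter_superset {α : Type*} [DecidableEq α] (s t : Finset α) (k : ℕ)
    (hts : t ⊆ s) (htk : t.card ≤ k) :
    ((powersetCard k s).filter (fun A => t ⊆ A)).card
      = (s.card - t.card).choose (k - t.card) := by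
  have : ((powersetCard k s).filter (fun A => t ⊆ A)).card
      = (powersetCard (k - t.card) (s \ t)).card := by
    apply Finset.card_bij' (i := fun A _ => A \ t) (j := fun B _ => B ∪ t)
    · intro A hA
      simp only [mem_filter, mem_powersetCard] at hA
      rw [mem_powersetCard]
      exact ⟨sdiff_subset_sdiff hA.1.1 (le_refl t), by rw [card_sdiff_of_subset hA.2, hA.1.2]⟩
    · intro B hB
      rw [mem_powersetCard] at hB
      simp only [mem_filter, mem_powersetCard]
      have hBt : Disjoint B t := disjoint_of_subset_left hB.1 sdiff_disjoint
      have hcard : B.card = k - t.card := hB.2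
      refine ⟨⟨union_subset (hB.1.trans sdiff_subset) hts, ?_⟩, subset_union_right⟩
      rw [card_union_of_disjoint hBt, hcard]
      have := card_le_card hts
      omega
    · intro A hA
      simp only [mem_filter, mem_powersetCard] at hA
      exact sdiff_union_of_subset hA.2
    · intro B hB
      rw [mem_powersetCard] at hB
      have hBt : Disjoint B t := disjoint_of_subset_left hB.1 sdiff_disjoint
      exact union_sdiff_cancel_right hBt
  rw [this, card_powersetCard, card_sdiff_of_subset hts]

theorem stmt3 {𝕜 H : Type*} [RCLike 𝕜] [NormedAddCommGroup H] [InnerProductSpace 𝕜 H]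
    (n k : ℕ) (hk : 2 ≤ k) (hkn : k < n) (x : Fin n → H) :
    ((n - 2).choose (k - 2) : ℝ) * ‖∑ i, x i‖ ^ 2 =
      (∑ A ∈ Finset.powersetCard k (Finset.univ : Finset (Fin n)), ‖∑ i ∈ A, x i‖ ^ 2) -
        ((n - 2).choose (k - 1) : ℝ) * ∑ i, ‖x i‖ ^ 2 := by
  set F : Fin n → Fin n → ℝ := fun i j => RCLike.re (inner 𝕜 (x i) (x j)) with hF
  have expand : ∀ s : Finset (Fin n), ‖∑ i ∈ s, x i‖ ^ 2 = ∑ i ∈ s, ∑ j ∈ s, F i j := by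
    intro s
    rw [← inner_self_eq_norm_sq (𝕜 := 𝕜)]
    simp only [sum_inner, inner_sum, map_sum, hF]
    exact Finset.sum_comm
  have hdiag : ∀ i, F i i = ‖x i‖ ^ 2 := fun i => inner_self_eq_norm_sq (𝕜 := 𝕜) (x i)
  have indicator : ∀ A : Finset (Fin n),
      (∑ i, ∑ j, if ({i, j} : Finset (Fin n)) ⊆ A then F i j else 0)
        = ∑ i ∈ A, ∑ j ∈ A, F i j := by
    intro A
    simp only [insert_subset_iff, singleton_subset_iff]
    have h1 : ∀ i : Fin n, (∑ j, if i ∈ A ∧ j ∈ A then F i j else 0)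
        = if i ∈ A then ∑ j ∈ A, F i j else 0 := by
      intro i
      by_cases hi : i ∈ A
      · simp [hi, Finset.sum_ite_mem]
      · simp [hi]
    rw [sum_congr rfl (fun i _ => h1 i)]
    simp [Finset.sum_ite_mem]
  have hcount : ∀ i j : Fin n,
      (((powersetCard k (univ : Finset (Fin n))).filter
          (fun A => ({i, j} : Finset (Fin n)) ⊆ A)).card : ℝ)
        = if i = j then ((n - 1).choose (k - 1) : ℝ) else ((n - 2).choose (k - 2) : ℝ) := by
    intro i j
    by_cases hij : i = j
    · subst hij
      simp only [if_pos rfl]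
      rw [card_filter_superset _ _ _ (by simp) (by simp; omega)]
      simp
    · simp only [if_neg hij]
      rw [card_filter_superset _ _ _ (by simp) ?_]
      · rw [card_univ, Fintype.card_fin, card_insert_of_notMem (by simp [hij]), card_singleton]
      · rw [card_insert_of_notMem (by simp [hij]), card_singleton]; omega
  have key : (∑ A ∈ powersetCard k (univ : Finset (Fin n)), ‖∑ i ∈ A, x i‖ ^ 2)
      = ∑ i, ∑ j, (((powersetCard k (univ : Finset (Fin n))).filter
          (fun A => ({i, j} : Finset (Fin n)) ⊆ A)).card : ℝ) * F i j := by
    have : ∀ A ∈ powersetCard k (univ : Finset (Fin n)),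
        ‖∑ i ∈ A, x i‖ ^ 2 = ∑ i, ∑ j, if ({i, j} : Finset (Fin n)) ⊆ A then F i j else 0 :=
      fun A _ => by rw [expand A, indicator A]
    rw [sum_congr rfl this, sum_comm]
    apply sum_congr rfl; intro i _
    rw [sum_comm]
    apply sum_congr rfl; intro j _
    rw [← sum_filter, sum_const, nsmul_eq_mul]
  have pascal : (n - 1).choose (k - 1) = (n - 2).choose (k - 2) + (n - 2).choose (k - 1) := by
    have h1 : n - 1 = (n - 2) + 1 := by omega
    have h2 : k - 1 = (k - 2) + 1 := by omega
    rw [h1, h2, Nat.choose_succ_succ]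
  have hfull : ‖∑ i, x i‖ ^ 2 = ∑ i, ∑ j, F i j := expand univ
  have hsplit : ∀ i : Fin n, (∑ j, (if i = j then ((n - 1).choose (k - 1) : ℝ)
        else ((n - 2).choose (k - 2) : ℝ)) * F i j)
      = ((n - 2).choose (k - 2) : ℝ) * (∑ j, F i j)
        + (((n - 1).choose (k - 1) : ℝ) - ((n - 2).choose (k - 2) : ℝ)) * F i i := by
    intro i
    have h : ∀ j : Fin n, (if i = j then ((n - 1).choose (k - 1) : ℝ)
          else ((n - 2).choose (k - 2) : ℝ)) * F i j
        = ((n - 2).choose (k - 2) : ℝ) * F i j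
          + (if i = j then (((n - 1).choose (k - 1) : ℝ)
              - ((n - 2).choose (k - 2) : ℝ)) * F i i else 0) := by
      intro j
      by_cases hij : i = j
      · subst hij; simp; ring
      · simp [hij]
    rw [sum_congr rfl (fun j _ => h j), sum_add_distrib, ← mul_sum,
      Finset.sum_ite_eq (univ : Finset (Fin n)) i
        (fun _ => (((n - 1).choose (k - 1) : ℝ) - ((n - 2).choose (k - 2) : ℝ)) * F i i)]
    simp
  rw [key]
  simp only [hcount]
  rw [sum_congr rfl (fun i _ => hsplit i), sum_add_distrib, ← mul_sum, ← hfull, ← mul_sum]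
  have hd : ∑ i, F i i = ∑ i, ‖x i‖ ^ 2 := sum_congr rfl (fun i _ => hdiag i)
  rw [hd]
  have hp : ((n - 1).choose (k - 1) : ℝ)
      = ((n - 2).choose (k - 2) : ℝ) + ((n - 2).choose (k - 1) : ℝ) := by
    rw [pascal]; push_cast; ring
  rw [hp]; ring
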